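/- If (Q,&,1) is a divisible quantale, then for all a,b ∈ Q, (b⧹a)&a = a∧b = a&(a⧸b); consequently the underlying lattice Q is a frame and the unit 1 is the top element. -/
import Mathlib


/-- In a divisible quantale, `(b ⧹ a) & a = a ⊓ b = a & (a ⧸ b)`;
consequently the underlying lattice is a frame and the unit is the top element. -/
theorem stmt1 {Q : Type*} [CompleteLattice Q] (mul : Q → Q → Q) (one : Q)
    (hassoc : ∀ a b c : Q, mul (mul a b) c = mul a (mul b c))
    (hunitl : ∀ a : Q, mul one a = a) (hunitr : ∀ a : Q, mul a one = a)
    (hdistl : ∀ (a : Q) (S : Set Q), mul a (sSup S) = ⨆ b ∈ S, mul a b)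
    (hdistr : ∀ (a : Q) (S : Set Q), mul (sSup S) a = ⨆ b ∈ S, mul b a)
    (hdiv : ∀ x y : Q, x ≤ y → ∃ a b : Q, mul a y = x ∧ mul y b = x) :
    (∀ a b : Q,
        mul (sSup {z | mul z a ≤ b}) a = a ⊓ b ∧ a ⊓ b = mul a (sSup {z | mul a z ≤ b})) ∧
      (∀ (a : Q) (S : Set Q), a ⊓ sSup S = ⨆ b ∈ S, a ⊓ b) ∧
      one = ⊤ := by
  have monoL : ∀ x y a : Q, x ≤ y → mul x a ≤ mul y a := by
    intro x y a h
    have hd := hdistr a {x, y}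
    rw [sSup_pair, sup_eq_right.mpr h] at hd
    rw [hd]
    exact le_biSup (fun b => mul b a) (Set.mem_insert x {y})
  have monoR : ∀ x y a : Q, x ≤ y → mul a x ≤ mul a y := by
    intro x y a h
    have hd := hdistl a {x, y}
    rw [sSup_pair, sup_eq_right.mpr h] at hd
    rw [hd]
    exact le_biSup (fun b => mul a b) (Set.mem_insert x {y})
  have topmul : mul ⊤ ⊤ = (⊤ : Q) := by
    apply le_antisymm le_top
    calc (⊤ : Q) = mul ⊤ one := (hunitr ⊤).symm
      _ ≤ mul ⊤ ⊤ := monoR one ⊤ ⊤ le_top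
  have hone : one = (⊤ : Q) := by
    obtain ⟨a, b, _, hb⟩ := hdiv one ⊤ le_top
    have : (⊤ : Q) = one := by
      calc (⊤ : Q) = mul ⊤ one := (hunitr ⊤).symm
        _ = mul ⊤ (mul ⊤ b) := by rw [hb]
        _ = mul (mul ⊤ ⊤) b := (hassoc ⊤ ⊤ b).symm
        _ = mul ⊤ b := by rw [topmul]
        _ = one := hb
    exact this.symm
  have absL : ∀ x a : Q, mul x a ≤ a := by
    intro x a
    have h1 : mul x a ≤ mul one a := monoL x one a (by rw [hone]; exact le_top)
    rwa [hunitl] at h1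
  have absR : ∀ x a : Q, mul a x ≤ a := by
    intro x a
    have h1 : mul a x ≤ mul a one := monoR x one a (by rw [hone]; exact le_top)
    rwa [hunitr] at h1
  have key1 : ∀ a b : Q, mul (sSup {z | mul z a ≤ b}) a = a ⊓ b := by
    intro a b
    apply le_antisymm
    · rw [hdistr]
      exact iSup₂_le fun z hz => le_inf (absL z a) hz
    · obtain ⟨u, v, hu, _⟩ := hdiv (a ⊓ b) a inf_le_left
      have hu' : u ∈ {z | mul z a ≤ b} := by
        simpa [hu] using inf_le_right (a := a) (b := b)
      calc a ⊓ b = mul u a := hu.symm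
        _ ≤ mul (sSup {z | mul z a ≤ b}) a := monoL _ _ _ (le_sSup hu')
  have key2 : ∀ a b : Q, a ⊓ b = mul a (sSup {z | mul a z ≤ b}) := by
    intro a b
    apply le_antisymm
    · obtain ⟨u, v, _, hv⟩ := hdiv (a ⊓ b) a inf_le_left
      have hv' : v ∈ {z | mul a z ≤ b} := by
        simpa [hv] using inf_le_right (a := a) (b := b)
      calc a ⊓ b = mul a v := hv.symm
        _ ≤ mul a (sSup {z | mul a z ≤ b}) := monoR _ _ _ (le_sSup hv')
    · rw [hdistl]
      exact iSup₂_le fun z hz => le_inf (absR z a) hz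
  refine ⟨fun a b => ⟨key1 a b, key2 a b⟩, ?_, hone⟩
  intro a S
  apply le_antisymm
  · have h := key2 (sSup S) a
    set w := sSup {z | mul (sSup S) z ≤ a} with hw
    have hwa : mul (sSup S) w ≤ a := by
      rw [hdistl]
      exact iSup₂_le fun z hz => hz
    have : a ⊓ sSup S = mul (sSup S) w := by rw [inf_comm]; exact h
    rw [this, hdistr]
    apply iSup₂_le
    intro s hs
    have h1 : mul s w ≤ a := (monoL s (sSup S) w (le_sSup hs)).trans hwa
    have h2 : mul s w ≤ s := absR w s
    exact le_trans (le_inf h1 h2) (le_biSup (fun b => a ⊓ b) hs)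
  · exact iSup₂_le fun b hb => inf_le_inf_left a (le_sSup hb)
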